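/- If C is an admissible column over [±n], then Φ(C) is a coadmissible column of the same height; moreover Φ is a bijection between admissible columns and coadmissible columns of the same height over [±n]. -/

import Mathlib

/-- The alphabet `[±n] = {1 < 2 < ⋯ < n < n̄ < ⋯ < 1̄}` is encoded as `{1, …, 2n} ⊆ ℕ`
with the usual order, the barred letter `ī` being encoded as `2n+1-i`. -/
def bar (n x : ℕ) : ℕ := 2 * n + 1 - x

/-- A column over `[±n]`: a strictly increasing list with entries in `{1, …, 2n}`. -/
def IsColumn (n : ℕ) (C : List ℕ) : Prop :=
  C.Chain' (· < ·) ∧ ∀ x ∈ C, 1 ≤ x ∧ x ≤ 2 * n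

/-- The one column condition (1CC): for every unbarred `i` with both `i` and `ī` in `C`,
the number of entries `x` with `x ≤ i` or `x ≥ ī` is at most `i`. -/
def OCC (n : ℕ) (C : List ℕ) : Prop :=
  ∀ i, 1 ≤ i → i ≤ n → i ∈ C → bar n i ∈ C →
    C.countP (fun x => decide (x ≤ i ∨ bar n i ≤ x)) ≤ i

/-- The set `I` of unbarred letters `z` such that both `z` and `z̄` occur in `C`,
listed in decreasing order `z₁ > z₂ > ⋯ > z_r`. -/
def Ilist (n : ℕ) (C : List ℕ) : List ℕ :=
  ((List.range (n + 1)).filter (fun z => decide (1 ≤ z ∧ z ∈ C ∧ bar n z ∈ C))).reverse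

/-- The greatest unbarred letter `t < bound` with `t ∉ C` and `t̄ ∉ C`, if any. -/
def pickBelow (n : ℕ) (C : List ℕ) (bound : ℕ) : Option ℕ :=
  ((List.range bound).filter (fun t => decide (1 ≤ t ∧ t ≤ n ∧ t ∉ C ∧ bar n t ∉ C))).max?

/-- The greedy construction of the set `J = {t₁ > ⋯ > t_r}` of Definition of splitting:
`t₁` is the greatest letter `< z₁` with `t₁, t̄₁ ∉ C` and `tᵢ` is the greatest letter
`< min (tᵢ₋₁, zᵢ)` with `tᵢ, t̄ᵢ ∉ C`; returns `none` if at some stage no letter exists. -/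
def splitJ (n : ℕ) (C : List ℕ) : List ℕ → ℕ → Option (List ℕ)
  | [], _ => some []
  | z :: zs, bound =>
    match pickBelow n C (min bound z) with
    | none => none
    | some t => (splitJ n C zs t).map (t :: ·)

def JlistOpt (n : ℕ) (C : List ℕ) : Option (List ℕ) := splitJ n C (Ilist n C) (n + 1)

/-- `C` can be split: the set `J` of the splitting definition exists. -/
def CanSplit (n : ℕ) (C : List ℕ) : Prop := (JlistOpt n C).isSome = true

/-- The set `J = {t₁ > ⋯ > t_r}` (empty if `C` cannot be split). -/
def Jlist (n : ℕ) (C : List ℕ) : List ℕ := (JlistOpt n C).getD []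

def sortCol (L : List ℕ) : List ℕ := L.mergeSort (· ≤ ·)

/-- The right column `rC`: replace each barred `z̄ᵢ` (for `zᵢ ∈ I`) by `t̄ᵢ` and reorder. -/
def rCol (n : ℕ) (C : List ℕ) : List ℕ :=
  sortCol ((C.filter (fun x => decide (x ∉ (Ilist n C).map (bar n)))) ++ (Jlist n C).map (bar n))

/-- The left column `ℓC`: replace each unbarred `zᵢ ∈ I` by `tᵢ` and reorder. -/
def lCol (n : ℕ) (C : List ℕ) : List ℕ :=
  sortCol ((C.filter (fun x => decide (x ∉ Ilist n C))) ++ Jlist n C)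

/-- `Φ(C)`: the column of the same size whose unbarred entries are taken from `ℓC`
and whose barred entries are taken from `rC`. -/
def PhiCol (n : ℕ) (C : List ℕ) : List ℕ :=
  sortCol ((lCol n C).filter (fun x => decide (x ≤ n)) ++
    (rCol n C).filter (fun x => decide (n < x)))

/-- A column is coadmissible if for every pair `i, ī` in `C`, the number `N*(i)` of
entries `x` with `i ≤ x ≤ ī` satisfies `N*(i) ≤ n - i + 1`. -/
def CoAdm (n : ℕ) (C : List ℕ) : Prop :=
  ∀ i, 1 ≤ i → i ≤ n → i ∈ C → bar n i ∈ C →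
    C.countP (fun x => decide (i ≤ x ∧ x ≤ bar n i)) ≤ n - i + 1

namespace PhiProof
open List

/-! ### Generic list lemmas -/

instance : IsAntisymm ℕ (· < ·) :=
  ⟨fun a b h1 h2 => absurd (lt_trans h1 h2) (lt_irrefl a)⟩

lemma col_sorted {n : ℕ} {C : List ℕ} (h : IsColumn n C) : C.Pairwise (· < ·) :=
  List.isChain_iff_pairwise.mp h.1

lemma col_nodup {n : ℕ} {C : List ℕ} (h : IsColumn n C) : C.Nodup :=
  (col_sorted h).nodup

lemma sortCol_perm (L : List ℕ) : sortCol L ~ L := List.mergeSort_perm _ _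

lemma sortCol_sorted (L : List ℕ) : (sortCol L).Pairwise (· ≤ ·) := by
  have := List.pairwise_mergeSort (le := fun a b : ℕ => decide (a ≤ b))
    (fun a b c h1 h2 => by simpa using le_trans (by simpa using h1) (by simpa using h2))
    (fun a b => by simpa using le_total a b) L
  refine this.imp ?_
  intro a b h; simpa using h

lemma sortCol_nodup {L : List ℕ} (h : L.Nodup) : (sortCol L).Nodup :=
  (sortCol_perm L).nodup_iff.mpr h

lemma sortCol_chain' {L : List ℕ} (h : L.Nodup) : (sortCol L).Chain' (· < ·) := by
  refine List.isChain_iff_pairwise.mpr ?_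
  have h1 := sortCol_sorted L
  have h2 : (sortCol L).Pairwise (· ≠ ·) := sortCol_nodup h
  exact (List.Pairwise.and h1 h2).imp (fun hab => lt_of_le_of_ne hab.1 hab.2)

lemma sortCol_mem {L : List ℕ} {x : ℕ} : x ∈ sortCol L ↔ x ∈ L :=
  (sortCol_perm L).mem_iff

lemma sortCol_length (L : List ℕ) : (sortCol L).length = L.length :=
  (sortCol_perm L).length_eq

/-- Two columns with the same elements are equal. -/
lemma col_eq_of_mem_iff {n : ℕ} {C D : List ℕ} (hC : IsColumn n C) (hD : IsColumn n D)
    (h : ∀ x, x ∈ C ↔ x ∈ D) : C = D := by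
  have hperm : C ~ D := (List.perm_ext_iff_of_nodup (col_nodup hC) (col_nodup hD)).2 h
  exact List.Perm.eq_of_pairwise (fun a b _ _ h1 h2 => absurd (lt_trans h1 h2) (lt_irrefl a))
    (col_sorted hC) (col_sorted hD) hperm

/-- Two strictly decreasing lists with the same elements are equal. -/
lemma desc_eq_of_mem_iff {C D : List ℕ} (hC : C.Pairwise (· > ·)) (hD : D.Pairwise (· > ·))
    (h : ∀ x, x ∈ C ↔ x ∈ D) : C = D := by
  have hC' : C.reverse.Pairwise (· < ·) := List.pairwise_reverse.2 hC
  have hD' : D.reverse.Pairwise (· < ·) := List.pairwise_reverse.2 hD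
  have hperm : C.reverse ~ D.reverse := (List.perm_ext_iff_of_nodup hC'.nodup hD'.nodup).2
    (by simpa using h)
  have := List.Perm.eq_of_pairwise (fun a b _ _ h1 h2 => absurd (lt_trans h1 h2) (lt_irrefl a))
    hC' hD' hperm
  simpa using congrArg List.reverse this

lemma desc_nodup {C : List ℕ} (hC : C.Pairwise (· > ·)) : C.Nodup :=
  hC.imp (fun h => Nat.ne_of_gt h)

/-- index lemmas for strictly decreasing lists -/
lemma desc_le_of_le {C : List ℕ} (hC : C.Pairwise (· > ·)) {i j : ℕ}
    (hj : j < C.length) (hij : i ≤ j) : C[j] ≤ C[i]'(lt_of_le_of_lt hij hj) := by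
  rcases Nat.eq_or_lt_of_le hij with rfl | hlt
  · exact le_refl _
  · exact le_of_lt (List.pairwise_iff_getElem.mp hC i j _ hj hlt)

lemma desc_mem_ge {C : List ℕ} (hC : C.Pairwise (· > ·)) {u : ℕ} (hu : u ∈ C)
    {k : ℕ} (hk : k + 1 < C.length) (hgt : C[k+1] < u) : C[k]'(by omega) ≤ u := by
  obtain ⟨m, hm, rfl⟩ := List.mem_iff_getElem.mp hu
  by_cases hmk : m ≤ k
  · exact desc_le_of_le (i := m) (j := k) hC (by omega) hmk
  · exfalso
    have : C[m] ≤ C[k+1] := desc_le_of_le hC hm (by omega)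
    omega

lemma desc_mem_take_iff {C : List ℕ} (hC : C.Pairwise (· > ·)) {u : ℕ} (hu : u ∈ C)
    {k : ℕ} (hk : k < C.length) : C[k] ≤ u ↔ u ∈ C.take (k+1) := by
  obtain ⟨m, hm, rfl⟩ := List.mem_iff_getElem.mp hu
  constructor
  · intro hle
    have hmk : m ≤ k := by
      by_contra hmk
      have : C[m] < C[k] := List.pairwise_iff_getElem.mp hC k m hk hm (by omega)
      omega
    refine List.mem_iff_getElem.mpr ⟨m, ?_, ?_⟩
    · simp [List.length_take]; omega
    · simp [List.getElem_take]
  · intro hmem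
    obtain ⟨j, hj, hje⟩ := List.mem_iff_getElem.mp hmem
    have hj' : j < k + 1 := by simp [List.length_take] at hj; omega
    rw [List.getElem_take] at hje
    rw [← hje]
    exact desc_le_of_le hC (by omega) (by omega)

/-! ### bar basics -/

lemma bar_bounds {n x : ℕ} (h1 : 1 ≤ x) (h2 : x ≤ 2 * n) :
    1 ≤ bar n x ∧ bar n x ≤ 2 * n := by unfold bar; omega

lemma bar_bar {n x : ℕ} (h2 : x ≤ 2 * n) : bar n (bar n x) = x := by unfold bar; omega

lemma bar_lt_bar {n x y : ℕ} (hy : y ≤ 2 * n) : bar n y < bar n x ↔ x < y := by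
  unfold bar; omega

lemma bar_le_bar {n x y : ℕ} (hx : x ≤ 2 * n) : bar n x ≤ bar n y ↔ y ≤ x := by
  unfold bar; omega

lemma bar_inj {n x y : ℕ} (hx : x ≤ 2 * n) (hy : y ≤ 2 * n) (h : bar n x = bar n y) :
    x = y := by unfold bar at h; omega

lemma bar_gt_n {n x : ℕ} (h1 : 1 ≤ x) (h2 : x ≤ n) : n < bar n x ∧ bar n x ≤ 2 * n := by
  unfold bar; omega

/-! ### Ilist basics -/

lemma mem_Ilist {n : ℕ} {C : List ℕ} {z : ℕ} :
    z ∈ Ilist n C ↔ 1 ≤ z ∧ z ≤ n ∧ z ∈ C ∧ bar n z ∈ C := by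
  simp only [Ilist, List.mem_reverse, List.mem_filter, List.mem_range,
    decide_eq_true_eq]
  constructor
  · rintro ⟨h1, h2, h3, h4⟩; exact ⟨h2, by omega, h3, h4⟩
  · rintro ⟨h1, h2, h3, h4⟩; exact ⟨by omega, h1, h3, h4⟩

lemma Ilist_desc (n : ℕ) (C : List ℕ) : (Ilist n C).Pairwise (· > ·) := by
  unfold Ilist
  rw [List.pairwise_reverse]
  exact List.pairwise_lt_range.filter _

lemma Ilist_nodup (n : ℕ) (C : List ℕ) : (Ilist n C).Nodup := desc_nodup (Ilist_desc n C)

/-! ### The free set -/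

/-- The set of free letters: unbarred `t` with `t ∉ C` and `t̄ ∉ C`. -/
def Fr (n : ℕ) (C : List ℕ) : Finset ℕ :=
  (Finset.Icc 1 n).filter (fun t => t ∉ C ∧ bar n t ∉ C)

lemma mem_Fr {n : ℕ} {C : List ℕ} {t : ℕ} :
    t ∈ Fr n C ↔ 1 ≤ t ∧ t ≤ n ∧ t ∉ C ∧ bar n t ∉ C := by
  simp [Fr, Finset.mem_filter, Finset.mem_Icc, and_assoc]

lemma pickBelow_eq_some_iff {n : ℕ} {C : List ℕ} {b t : ℕ} :
    pickBelow n C b = some t ↔ t ∈ Fr n C ∧ t < b ∧ ∀ s ∈ Fr n C, s < b → s ≤ t := by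
  unfold pickBelow
  rw [List.max?_eq_some_iff]
  simp only [List.mem_filter, List.mem_range, decide_eq_true_eq, mem_Fr]
  constructor
  · rintro ⟨⟨hb, h1, h2, h3, h4⟩, hmax⟩
    exact ⟨⟨h1, h2, h3, h4⟩, hb, fun s hs hsb => hmax s ⟨hsb, hs.1, hs.2.1, hs.2.2.1, hs.2.2.2⟩⟩
  · rintro ⟨⟨h1, h2, h3, h4⟩, hb, hmax⟩
    exact ⟨⟨hb, h1, h2, h3, h4⟩, fun s hs => hmax s ⟨hs.2.1, hs.2.2.1, hs.2.2.2⟩ hs.1⟩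

/-! ### SpecJ : specification of the greedy splitting -/

def SpecJ (F : Finset ℕ) : List ℕ → ℕ → List ℕ → Prop
  | [], _, ts => ts = []
  | z :: zs, b, ts => ∃ t ts', ts = t :: ts' ∧ t ∈ F ∧ t < min b z ∧
      (∀ s ∈ F, s < min b z → s ≤ t) ∧ SpecJ F zs t ts'

lemma splitJ_eq_some_iff {n : ℕ} {C : List ℕ} :
    ∀ {zs : List ℕ} {b : ℕ} {ts : List ℕ},
      splitJ n C zs b = some ts ↔ SpecJ (Fr n C) zs b ts
  | [], b, ts => by simp [splitJ, SpecJ, eq_comm]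
  | z :: zs, b, ts => by
    simp only [splitJ, SpecJ]
    constructor
    · intro h
      cases hp : pickBelow n C (min b z) with
      | none => rw [hp] at h; simp at h
      | some t =>
        rw [hp] at h
        simp only [Option.map_eq_some_iff] at h
        obtain ⟨ts', hts', rfl⟩ := h
        obtain ⟨h1, h2, h3⟩ := pickBelow_eq_some_iff.mp hp
        exact ⟨t, ts', rfl, h1, h2, h3, splitJ_eq_some_iff.mp hts'⟩
    · rintro ⟨t, ts', rfl, h1, h2, h3, h4⟩
      have hp : pickBelow n C (min b z) = some t := pickBelow_eq_some_iff.mpr ⟨h1, h2, h3⟩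
      rw [hp]
      simp only [Option.map_eq_some_iff]
      exact ⟨ts', splitJ_eq_some_iff.mpr h4, rfl⟩

/-- Existence of the greedy splitting, given the counting hypothesis. -/
lemma specJ_exists (F : Finset ℕ) :
    ∀ (zs : List ℕ) (b : ℕ),
      (∀ k (h : k < zs.length), zs.length - k ≤ ((F.filter (· < min b zs[k])).card)) →
      ∃ ts, SpecJ F zs b ts
  | [], b, _ => ⟨[], rfl⟩
  | z :: zs, b, H => by
    have h0 := H 0 (by simp)
    simp only [List.length_cons, Nat.sub_zero, List.getElem_cons_zero] at h0
    have hne : (F.filter (· < min b z)).Nonempty := by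
      rw [← Finset.card_pos]; omega
    set t := (F.filter (· < min b z)).max' hne with ht
    have htmem := (F.filter (· < min b z)).max'_mem hne
    rw [Finset.mem_filter] at htmem
    have hmax : ∀ s ∈ F, s < min b z → s ≤ t := by
      intro s hs hsb
      apply Finset.le_max'
      rw [Finset.mem_filter]
      exact ⟨hs, hsb⟩
    have H' : ∀ k (h : k < zs.length), zs.length - k ≤ ((F.filter (· < min t zs[k])).card) := by
      intro k hk
      by_cases hc : zs[k] ≤ t
      · have h1 := H (k+1) (by simpa using Nat.succ_lt_succ hk)
        simp only [List.length_cons, List.getElem_cons_succ] at h1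
        have hsub : F.filter (· < min b zs[k]) ⊆ F.filter (· < min t zs[k]) := by
          intro s hs
          rw [Finset.mem_filter] at hs ⊢
          refine ⟨hs.1, ?_⟩
          have h2 := hs.2
          omega
        calc zs.length - k ≤ (F.filter (· < min b zs[k])).card := by
              have := h1; omega
          _ ≤ _ := Finset.card_le_card hsub
      · push_neg at hc
        have hmin : min t zs[k] = t := by omega
        rw [hmin]
        have hsub : F.filter (· < min b z) ⊆ insert t (F.filter (· < t)) := by
          intro s hs
          rw [Finset.mem_filter] at hs
          rcases Nat.lt_or_ge s t with hst | hst
          · exact Finset.mem_insert.mpr (Or.inr (Finset.mem_filter.mpr ⟨hs.1, hst⟩))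
          · have : s ≤ t := hmax s hs.1 hs.2
            have : s = t := le_antisymm this hst
            exact Finset.mem_insert.mpr (Or.inl this)
        have hc1 := Finset.card_le_card hsub
        have hc2 := Finset.card_insert_le t (F.filter (· < t))
        omega
    obtain ⟨ts', hts'⟩ := specJ_exists F zs t H'
    exact ⟨t :: ts', t, ts', rfl, htmem.1, htmem.2, hmax, hts'⟩

/-- Basic properties of the output of the greedy splitting. -/
lemma specJ_props (F : Finset ℕ) :
    ∀ {zs : List ℕ} {b : ℕ} {ts : List ℕ}, SpecJ F zs b ts →
      ts.length = zs.length ∧ (∀ x ∈ ts, x ∈ F ∧ x < b) ∧ ts.Pairwise (· > ·) ∧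
        (∀ k (h : k < ts.length) (h' : k < zs.length), ts[k] < zs[k])
  | [], b, ts, h => by subst h; simp
  | z :: zs, b, ts, h => by
    obtain ⟨t, ts', rfl, h1, h2, _h3, h4⟩ := h
    obtain ⟨ih1, ih2, ih3, ih4⟩ := specJ_props F h4
    refine ⟨by simp [ih1], ?_, ?_, ?_⟩
    · rintro x hx
      rcases List.mem_cons.mp hx with rfl | hx'
      · exact ⟨h1, by omega⟩
      · obtain ⟨hF, hlt⟩ := ih2 x hx'
        exact ⟨hF, by omega⟩
    · exact List.pairwise_cons.mpr ⟨fun x hx => (ih2 x hx).2, ih3⟩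
    · intro k hk hk'
      cases k with
      | zero => simpa using (by omega : t < z)
      | succ k => simpa using ih4 k (by simpa using hk) (by simpa using hk')

/-- The gap lemma: if `u` is free with `ts[k] < u < zs[k]` and `u < b`, then
`u` is one of the previously chosen elements `ts[0], …, ts[k-1]`. -/
lemma specJ_gap (F : Finset ℕ) :
    ∀ {zs : List ℕ} {b : ℕ} {ts : List ℕ}, SpecJ F zs b ts → zs.Pairwise (· > ·) →
      ∀ k (hk : k < zs.length) (hk' : k < ts.length) (u : ℕ), u ∈ F →
        ts[k] < u → u < zs[k] → u < b →
        u ∈ ts.take k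
  | [], b, ts, h, _, k, hk => by simp at hk
  | z :: zs, b, ts, h, hzs, k, hk => by
    obtain ⟨t, ts', rfl, h1, h2, h3, h4⟩ := h
    intro hk' u huF hgt hlt hub
    cases k with
    | zero =>
      exfalso
      simp only [List.getElem_cons_zero] at hgt
      have : u ≤ t := h3 u huF (by simp only [List.getElem_cons_zero] at hlt; omega)
      omega
    | succ k =>
      simp only [List.getElem_cons_succ] at hgt hlt
      have hkz : k < zs.length := by simpa using hk
      have hk'' : k < ts'.length := by simpa using hk'
      rcases Nat.lt_trichotomy u t with hut | hut | hut
      · have := specJ_gap F h4 (List.pairwise_cons.mp hzs).2 k (by simpa using hk) hk'' u huF hgt hlt hut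
        simp only [List.take_succ_cons, List.mem_cons]
        exact Or.inr this
      · simp [List.take_succ_cons, hut]
      · exfalso
        have huz : u < z := lt_trans hlt ((List.pairwise_cons.mp hzs).1 _ (List.getElem_mem (by simpa using hk)))
        have : u ≤ t := h3 u huF (by omega)
        omega

/-! ### Counting: admissibility gives the greedy hypothesis -/

lemma countP_toFinset {l : List ℕ} (h : l.Nodup) (p : ℕ → Bool) :
    l.countP p = (l.toFinset.filter (fun x => p x = true)).card := by
  rw [← List.toFinset_filter, List.toFinset_card_of_nodup (h.filter p),
    List.countP_eq_length_filter]

lemma count_free_lower {n : ℕ} {C : List ℕ} (hcol : IsColumn n C) (hOCC : OCC n C) :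
    ∀ k (hk : k < (Ilist n C).length),
      (Ilist n C).length - k ≤ ((Fr n C).filter (· < (Ilist n C)[k])).card := by
  intro k hk
  set I := Ilist n C with hI
  set z := I[k] with hz
  have hzmem : z ∈ I := List.getElem_mem hk
  obtain ⟨hz1, hzn, hzC, hzbC⟩ := mem_Ilist.mp hzmem
  set S := C.toFinset with hS
  set K := Finset.Icc 1 z with hK
  have hIlen : (Ilist n C).length = I.length := rfl
  have hcardA : (K.filter (fun s => s ∈ C)).card = (S.filter (fun x => x ≤ z)).card := by
    congr 1
    ext x
    simp only [Finset.mem_filter, hK, Finset.mem_Icc, hS, List.mem_toFinset]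
    constructor
    · rintro ⟨⟨_, hx2⟩, hx3⟩; exact ⟨hx3, hx2⟩
    · rintro ⟨hx1, hx2⟩; exact ⟨⟨(hcol.2 x hx1).1, hx2⟩, hx1⟩
  have hcardB : (K.filter (fun s => bar n s ∈ C)).card
      = (S.filter (fun x => bar n z ≤ x)).card := by
    apply Finset.card_bij (fun s _ => bar n s)
    · intro s hs
      simp only [Finset.mem_filter, hK, Finset.mem_Icc] at hs
      simp only [Finset.mem_filter, hS, List.mem_toFinset]
      exact ⟨hs.2, (bar_le_bar (by omega)).mpr hs.1.2⟩
    · intro s hs s' hs' he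
      simp only [Finset.mem_filter, hK, Finset.mem_Icc] at hs hs'
      exact bar_inj (by omega) (by omega) he
    · intro x hx
      simp only [Finset.mem_filter, hS, List.mem_toFinset] at hx
      have hxb := hcol.2 x hx.1
      refine ⟨bar n x, ?_, bar_bar hxb.2⟩
      simp only [Finset.mem_filter, hK, Finset.mem_Icc]
      rw [bar_bar hxb.2]
      refine ⟨⟨(bar_bounds hxb.1 hxb.2).1, ?_⟩, hx.1⟩
      have := hx.2; unfold bar at this ⊢; omega
  have hdisj : Disjoint (S.filter (fun x => x ≤ z)) (S.filter (fun x => bar n z ≤ x)) := by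
    rw [Finset.disjoint_left]
    intro x hx hy
    simp only [Finset.mem_filter] at hx hy
    unfold bar at hy; omega
  have hOCCz := hOCC z hz1 hzn hzC hzbC
  have hcount : C.countP (fun x => decide (x ≤ z ∨ bar n z ≤ x))
      = (S.filter (fun x => x ≤ z)).card + (S.filter (fun x => bar n z ≤ x)).card := by
    rw [countP_toFinset (col_nodup hcol)]
    have he : (S.filter (fun x => decide (x ≤ z ∨ bar n z ≤ x) = true))
        = S.filter (fun x => x ≤ z) ∪ S.filter (fun x => bar n z ≤ x) := by
      rw [← Finset.filter_or]
      apply Finset.filter_congr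
      intro x _; simp
    rw [he, Finset.card_union_of_disjoint hdisj]
  have hAB : (K.filter (fun s => s ∈ C)).card + (K.filter (fun s => bar n s ∈ C)).card ≤ z := by
    rw [hcardA, hcardB, ← hcount]; exact hOCCz
  have hIE : (K.filter (fun s => s ∈ C ∨ bar n s ∈ C)).card
      + (K.filter (fun s => s ∈ C ∧ bar n s ∈ C)).card
      = (K.filter (fun s => s ∈ C)).card + (K.filter (fun s => bar n s ∈ C)).card := by
    rw [Finset.filter_or, Finset.filter_and]
    exact Finset.card_union_add_card_inter _ _
  have hpart : (K.filter (fun s => s ∈ C ∨ bar n s ∈ C)).card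
      + (K.filter (fun s => ¬(s ∈ C ∨ bar n s ∈ C))).card = K.card :=
    Finset.card_filter_add_card_filter_not _
  have hKcard : K.card = z := by rw [hK, Nat.card_Icc]; omega
  have hP : I.length - k ≤ (K.filter (fun s => s ∈ C ∧ bar n s ∈ C)).card := by
    have hsub : (I.drop k).toFinset ⊆ K.filter (fun s => s ∈ C ∧ bar n s ∈ C) := by
      intro x hx
      rw [List.mem_toFinset] at hx
      obtain ⟨j, hj, hje⟩ := List.mem_iff_getElem.mp hx
      rw [List.length_drop] at hj
      rw [List.getElem_drop] at hje
      have hxI : x ∈ I := hje ▸ List.getElem_mem (by omega)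
      obtain ⟨hx1, _, hx3, hx4⟩ := mem_Ilist.mp hxI
      have hxz : x ≤ z := by
        rw [← hje, hz]
        exact desc_le_of_le (Ilist_desc n C) (by omega) (by omega)
      exact Finset.mem_filter.mpr ⟨Finset.mem_Icc.mpr ⟨hx1, hxz⟩, hx3, hx4⟩
    have hcard := Finset.card_le_card hsub
    have hnd : (I.drop k).Nodup := (List.drop_sublist k I).nodup (Ilist_nodup n C)
    rw [List.toFinset_card_of_nodup hnd, List.length_drop] at hcard
    exact hcard
  have hfree : (Fr n C).filter (· < z) = K.filter (fun s => ¬(s ∈ C ∨ bar n s ∈ C)) := by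
    ext x
    simp only [Finset.mem_filter, mem_Fr, hK, Finset.mem_Icc]
    constructor
    · rintro ⟨⟨h1, h2, h3, h4⟩, h5⟩
      exact ⟨⟨h1, by omega⟩, by tauto⟩
    · rintro ⟨⟨h1, h2⟩, h3⟩
      push_neg at h3
      have hxz : x ≠ z := fun he => h3.1 (he ▸ hzC)
      exact ⟨⟨h1, by omega, h3.1, h3.2⟩, by omega⟩
  rw [hfree]
  have hlen : (Ilist n C).length = I.length := rfl
  omega

/-- The splitting exists for admissible columns, and `Jlist` satisfies the spec. -/
lemma jlist_spec {n : ℕ} {C : List ℕ} (hcol : IsColumn n C) (hOCC : OCC n C) :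
    SpecJ (Fr n C) (Ilist n C) (n + 1) (Jlist n C) := by
  have H : ∀ k (h : k < (Ilist n C).length),
      (Ilist n C).length - k ≤ ((Fr n C).filter (· < min (n+1) (Ilist n C)[k])).card := by
    intro k hk
    have hle : (Ilist n C)[k] ≤ n := (mem_Ilist.mp (List.getElem_mem hk)).2.1
    have : min (n+1) (Ilist n C)[k] = (Ilist n C)[k] := by omega
    rw [this]
    exact count_free_lower hcol hOCC k hk
  obtain ⟨ts, hts⟩ := specJ_exists (Fr n C) (Ilist n C) (n+1) H
  have hsome : JlistOpt n C = some ts := splitJ_eq_some_iff.mpr hts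
  have : Jlist n C = ts := by unfold Jlist; rw [hsome]; rfl
  rw [this]; exact hts

lemma canSplit {n : ℕ} {C : List ℕ} (hcol : IsColumn n C) (hOCC : OCC n C) :
    CanSplit n C := by
  unfold CanSplit
  rw [Option.isSome_iff_exists]
  exact ⟨Jlist n C, splitJ_eq_some_iff.mpr (jlist_spec hcol hOCC)⟩

/-! ### Properties of Jlist -/

lemma Jlist_props {n : ℕ} {C : List ℕ} (hcol : IsColumn n C) (hOCC : OCC n C) :
    (Jlist n C).length = (Ilist n C).length ∧ (∀ t ∈ Jlist n C, t ∈ Fr n C) ∧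
    (Jlist n C).Pairwise (· > ·) ∧
    (∀ k (h : k < (Jlist n C).length) (h' : k < (Ilist n C).length),
      (Jlist n C)[k] < (Ilist n C)[k]) := by
  have h := specJ_props (Fr n C) (jlist_spec hcol hOCC)
  exact ⟨h.1, fun t ht => (h.2.1 t ht).1, h.2.2.1, h.2.2.2⟩

lemma Jlist_nodup {n : ℕ} {C : List ℕ} (hcol : IsColumn n C) (hOCC : OCC n C) :
    (Jlist n C).Nodup := desc_nodup (Jlist_props hcol hOCC).2.2.1

lemma mem_Jb {n : ℕ} {C : List ℕ} {x : ℕ} :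
    x ∈ (Jlist n C).map (bar n) ↔ ∃ t ∈ Jlist n C, bar n t = x := by
  simp [List.mem_map]

lemma Ib_gt_n {n : ℕ} {C : List ℕ} {y : ℕ} (hy : y ∈ (Ilist n C).map (bar n)) :
    n < y ∧ y ≤ 2 * n := by
  obtain ⟨z, hz, rfl⟩ := List.mem_map.mp hy
  obtain ⟨h1, h2, _, _⟩ := mem_Ilist.mp hz
  exact ⟨(bar_gt_n h1 h2).1, (bar_gt_n h1 h2).2⟩

lemma Jb_facts {n : ℕ} {C : List ℕ} (hcol : IsColumn n C) (hOCC : OCC n C) {y : ℕ}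
    (hy : y ∈ (Jlist n C).map (bar n)) : n < y ∧ y ≤ 2 * n ∧ y ∉ C := by
  obtain ⟨t, ht, rfl⟩ := List.mem_map.mp hy
  obtain ⟨h1, h2, _, h4⟩ := mem_Fr.mp ((Jlist_props hcol hOCC).2.1 t ht)
  exact ⟨(bar_gt_n h1 h2).1, (bar_gt_n h1 h2).2, h4⟩

/-! ### Structure of PhiCol -/

lemma phi_perm (n : ℕ) (C : List ℕ) :
    PhiCol n C ~
      ((C.filter (fun x => decide (x ∉ Ilist n C))).filter (fun x => decide (x ≤ n)) ++
        (Jlist n C).filter (fun x => decide (x ≤ n))) ++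
      ((C.filter (fun x => decide (x ∉ (Ilist n C).map (bar n)))).filter
          (fun x => decide (n < x)) ++
        ((Jlist n C).map (bar n)).filter (fun x => decide (n < x))) := by
  have h1 : PhiCol n C ~ (lCol n C).filter (fun x => decide (x ≤ n)) ++
      (rCol n C).filter (fun x => decide (n < x)) := sortCol_perm _
  have h2 : (lCol n C).filter (fun x => decide (x ≤ n)) ~
      (C.filter (fun x => decide (x ∉ Ilist n C))).filter (fun x => decide (x ≤ n)) ++
        (Jlist n C).filter (fun x => decide (x ≤ n)) := by
    have := (sortCol_perm ((C.filter (fun x => decide (x ∉ Ilist n C))) ++ Jlist n C)).filter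
      (fun x => decide (x ≤ n))
    rwa [List.filter_append] at this
  have h3 : (rCol n C).filter (fun x => decide (n < x)) ~
      (C.filter (fun x => decide (x ∉ (Ilist n C).map (bar n)))).filter
          (fun x => decide (n < x)) ++
        ((Jlist n C).map (bar n)).filter (fun x => decide (n < x)) := by
    have := (sortCol_perm ((C.filter (fun x => decide (x ∉ (Ilist n C).map (bar n)))) ++
      (Jlist n C).map (bar n))).filter (fun x => decide (n < x))
    rwa [List.filter_append] at this
  exact h1.trans (h2.append h3)

lemma phi_perm' {n : ℕ} {C : List ℕ} (hcol : IsColumn n C) (hOCC : OCC n C) :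
    PhiCol n C ~
      ((C.filter (fun x => decide (x ∉ Ilist n C))).filter (fun x => decide (x ≤ n)) ++
        Jlist n C) ++
      ((C.filter (fun x => decide (x ∉ (Ilist n C).map (bar n)))).filter
          (fun x => decide (n < x)) ++
        (Jlist n C).map (bar n)) := by
  have hJ : (Jlist n C).filter (fun x => decide (x ≤ n)) = Jlist n C := by
    apply List.filter_eq_self.mpr
    intro t ht
    simpa using (mem_Fr.mp ((Jlist_props hcol hOCC).2.1 t ht)).2.1
  have hJb : ((Jlist n C).map (bar n)).filter (fun x => decide (n < x)) =
      (Jlist n C).map (bar n) := by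
    apply List.filter_eq_self.mpr
    intro y hy
    simpa using (Jb_facts hcol hOCC hy).1
  have := phi_perm n C
  rwa [hJ, hJb] at this

lemma mem_phi {n : ℕ} {C : List ℕ} (hcol : IsColumn n C) (hOCC : OCC n C) {x : ℕ} :
    x ∈ PhiCol n C ↔
      (x ∈ C ∧ x ∉ Ilist n C ∧ x ∉ (Ilist n C).map (bar n)) ∨
      x ∈ Jlist n C ∨ x ∈ (Jlist n C).map (bar n) := by
  rw [(phi_perm' hcol hOCC).mem_iff]
  simp only [List.mem_append, List.mem_filter, decide_eq_true_eq]
  constructor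
  · rintro ((⟨⟨hxC, hxI⟩, hxn⟩ | hxJ) | (⟨⟨hxC, hxIb⟩, hxn⟩ | hxJb))
    · exact Or.inl ⟨hxC, hxI, fun hb => by have := Ib_gt_n hb; omega⟩
    · exact Or.inr (Or.inl hxJ)
    · refine Or.inl ⟨hxC, fun hI => ?_, hxIb⟩
      · have := (mem_Ilist.mp hI).2.1; omega
    · exact Or.inr (Or.inr hxJb)
  · rintro (⟨hxC, hxI, hxIb⟩ | hxJ | hxJb)
    · rcases le_or_gt x n with hle | hlt
      · exact Or.inl (Or.inl ⟨⟨hxC, hxI⟩, hle⟩)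
      · exact Or.inr (Or.inl ⟨⟨hxC, hxIb⟩, hlt⟩)
    · exact Or.inl (Or.inr hxJ)
    · exact Or.inr (Or.inr hxJb)

lemma nodup_phi {n : ℕ} {C : List ℕ} (hcol : IsColumn n C) (hOCC : OCC n C) :
    (PhiCol n C).Nodup := by
  rw [(phi_perm' hcol hOCC).nodup_iff]
  have hCnd := col_nodup hcol
  have hJnd := Jlist_nodup hcol hOCC
  have hJF := (Jlist_props hcol hOCC).2.1
  have hJbnd : ((Jlist n C).map (bar n)).Nodup := by
    apply hJnd.map_on
    intro x hx y hy hxy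
    have hx' := mem_Fr.mp (hJF x hx)
    have hy' := mem_Fr.mp (hJF y hy)
    exact bar_inj (by omega) (by omega) hxy
  rw [List.nodup_append, List.nodup_append, List.nodup_append]
  refine ⟨⟨(hCnd.filter _).filter _, hJnd, ?_⟩, ⟨(hCnd.filter _).filter _, hJbnd, ?_⟩, ?_⟩
  · intro a ha b hb hab; subst hab
    have haC : a ∈ C := List.mem_of_mem_filter (List.mem_of_mem_filter ha)
    exact (mem_Fr.mp (hJF a hb)).2.2.1 haC
  · intro a ha b hb hab; subst hab
    have haC : a ∈ C := List.mem_of_mem_filter (List.mem_of_mem_filter ha)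
    exact (Jb_facts hcol hOCC hb).2.2 haC
  · intro a ha b hb hab; subst hab
    have han : a ≤ n := by
      rcases List.mem_append.mp ha with h | h
      · have := List.of_mem_filter h; simpa using this
      · simpa using (mem_Fr.mp (hJF a h)).2.1
    have hbn : n < a := by
      rcases List.mem_append.mp hb with h | h
      · have := List.of_mem_filter h; simpa using this
      · exact (Jb_facts hcol hOCC h).1
    omega

lemma phi_isColumn {n : ℕ} {C : List ℕ} (hcol : IsColumn n C) (hOCC : OCC n C) :
    IsColumn n (PhiCol n C) := by
  constructor
  · apply sortCol_chain'
    exact (sortCol_perm _).nodup_iff.mp (nodup_phi hcol hOCC)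
  · intro x hx
    rcases (mem_phi hcol hOCC).mp hx with ⟨hxC, _, _⟩ | hxJ | hxJb
    · exact hcol.2 x hxC
    · have := mem_Fr.mp ((Jlist_props hcol hOCC).2.1 x hxJ); omega
    · have := Jb_facts hcol hOCC hxJb; omega

lemma Ilist_phi {n : ℕ} {C : List ℕ} (hcol : IsColumn n C) (hOCC : OCC n C) :
    Ilist n (PhiCol n C) = Jlist n C := by
  apply desc_eq_of_mem_iff (Ilist_desc n _) (Jlist_props hcol hOCC).2.2.1
  intro z
  rw [mem_Ilist]
  have hJF := (Jlist_props hcol hOCC).2.1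
  constructor
  · rintro ⟨h1, h2, h3, h4⟩
    rcases (mem_phi hcol hOCC).mp h3 with ⟨hzC, hzI, _⟩ | hzJ | hzJb
    · exfalso
      rcases (mem_phi hcol hOCC).mp h4 with ⟨hbC, _, hbIb⟩ | hbJ | hbJb
      · exact hzI (mem_Ilist.mpr ⟨h1, h2, hzC, hbC⟩)
      · have := mem_Fr.mp (hJF _ hbJ)
        have := (bar_gt_n h1 h2).1
        omega
      · obtain ⟨t, ht, hte⟩ := List.mem_map.mp hbJb
        have htF := mem_Fr.mp (hJF t ht)
        have : t = z := bar_inj (by omega) (by omega) hte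
        exact htF.2.2.1 (this ▸ hzC)
    · exact hzJ
    · exfalso
      have := Jb_facts hcol hOCC hzJb
      omega
  · intro hz
    have hF := mem_Fr.mp (hJF z hz)
    refine ⟨hF.1, hF.2.1, ?_, ?_⟩
    · exact (mem_phi hcol hOCC).mpr (Or.inr (Or.inl hz))
    · exact (mem_phi hcol hOCC).mpr (Or.inr (Or.inr (List.mem_map.mpr ⟨z, hz, rfl⟩)))

/-! ### Length of PhiCol -/

lemma Ib_nodup {n : ℕ} {C : List ℕ} : ((Ilist n C).map (bar n)).Nodup := by
  apply (Ilist_nodup n C).map_on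
  intro x hx y hy hxy
  have hx' := mem_Ilist.mp hx
  have hy' := mem_Ilist.mp hy
  exact bar_inj (by omega) (by omega) hxy

lemma phi_length {n : ℕ} {C : List ℕ} (hcol : IsColumn n C) (hOCC : OCC n C) :
    (PhiCol n C).length = C.length := by
  have hperm := phi_perm' hcol hOCC
  rw [hperm.length_eq]
  simp only [List.length_append, List.length_map]
  set S := C.toFinset with hS
  set I := Ilist n C with hI
  set J := Jlist n C with hJdef
  set Ib := I.map (bar n) with hIb
  have hJI : J.length = I.length := (Jlist_props hcol hOCC).1
  set r := I.length with hr
  have hCnd := col_nodup hcol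
  -- left part
  have hA1 : ((C.filter (fun x => decide (x ∉ I))).filter (fun x => decide (x ≤ n))).length
      = ((S.filter (fun x => x ≤ n)).filter (fun x => x ∉ I)).card := by
    rw [← List.countP_eq_length_filter, countP_toFinset (hCnd.filter _), List.toFinset_filter,
      Finset.filter_filter, Finset.filter_filter]
    congr 1
    apply Finset.filter_congr
    intro x _
    simp [and_comm]
  have hA2 : ((C.filter (fun x => decide (x ∉ Ib))).filter (fun x => decide (n < x))).length
      = ((S.filter (fun x => n < x)).filter (fun x => x ∉ Ib)).card := by
    rw [← List.countP_eq_length_filter, countP_toFinset (hCnd.filter _), List.toFinset_filter,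
      Finset.filter_filter, Finset.filter_filter]
    congr 1
    apply Finset.filter_congr
    intro x _
    simp [and_comm]
  have hpart1 : ((S.filter (fun x => x ≤ n)).filter (fun x => x ∈ I)).card
      + ((S.filter (fun x => x ≤ n)).filter (fun x => x ∉ I)).card
      = (S.filter (fun x => x ≤ n)).card :=
    Finset.card_filter_add_card_filter_not _
  have hpartI : (S.filter (fun x => x ≤ n)).filter (fun x => x ∈ I) = I.toFinset := by
    ext x
    simp only [Finset.mem_filter, List.mem_toFinset, hS]
    constructor
    · tauto
    · intro hx
      have := mem_Ilist.mp hx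
      exact ⟨⟨this.2.2.1, this.2.1⟩, hx⟩
  have hpart2 : ((S.filter (fun x => n < x)).filter (fun x => x ∈ Ib)).card
      + ((S.filter (fun x => n < x)).filter (fun x => x ∉ Ib)).card
      = (S.filter (fun x => n < x)).card :=
    Finset.card_filter_add_card_filter_not _
  have hpartIb : (S.filter (fun x => n < x)).filter (fun x => x ∈ Ib) = Ib.toFinset := by
    ext x
    simp only [Finset.mem_filter, List.mem_toFinset, hS]
    constructor
    · tauto
    · intro hx
      refine ⟨⟨?_, (Ib_gt_n hx).1⟩, hx⟩
      obtain ⟨z, hz, rfl⟩ := List.mem_map.mp hx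
      exact (mem_Ilist.mp hz).2.2.2
  have hIcard : I.toFinset.card = r := List.toFinset_card_of_nodup (Ilist_nodup n C)
  have hIbcard : Ib.toFinset.card = r := by
    rw [List.toFinset_card_of_nodup Ib_nodup, List.length_map]
  have hSsplit : (S.filter (fun x => x ≤ n)).card + (S.filter (fun x => n < x)).card
      = C.length := by
    have h1 : (S.filter (fun x => x ≤ n)).card + (S.filter (fun x => ¬ (x ≤ n))).card
        = S.card := Finset.card_filter_add_card_filter_not _
    have h2 : S.filter (fun x => ¬ (x ≤ n)) = S.filter (fun x => n < x) := by
      apply Finset.filter_congr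
      intro x _
      simp
    rw [h2] at h1
    rw [h1, hS, List.toFinset_card_of_nodup hCnd]
  rw [hA1, hA2]
  rw [hpartIb] at hpart2
  rw [hpartI] at hpart1
  omega

/-! ### Coadmissibility of PhiCol -/

lemma take_toFinset_card {l : List ℕ} (h : l.Nodup) {m : ℕ} (hm : m ≤ l.length) :
    (l.take m).toFinset.card = m := by
  rw [List.toFinset_card_of_nodup ((List.take_sublist m l).nodup h), List.length_take]
  omega

lemma phi_coadm {n : ℕ} {C : List ℕ} (hcol : IsColumn n C) (hOCC : OCC n C) :
    CoAdm n (PhiCol n C) := by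
  intro i hi1 hin hiP hbiP
  have hiJ : i ∈ Jlist n C := by
    rw [← Ilist_phi hcol hOCC]
    exact mem_Ilist.mpr ⟨hi1, hin, hiP, hbiP⟩
  obtain ⟨k, hkJ, hkJe⟩ := List.mem_iff_getElem.mp hiJ
  have hJI := (Jlist_props hcol hOCC).1
  have hJdesc := (Jlist_props hcol hOCC).2.2.1
  have hJF := (Jlist_props hcol hOCC).2.1
  have hJnd := Jlist_nodup hcol hOCC
  have hkI : k < (Ilist n C).length := by omega
  have hIdesc := Ilist_desc n C
  have hInd := Ilist_nodup n C
  have hbarn : n < bar n i ∧ bar n i ≤ 2 * n := bar_gt_n hi1 hin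
  set q : ℕ → Prop := fun x => i ≤ x ∧ x ≤ bar n i with hq
  have hcountP : (PhiCol n C).countP (fun x => decide (i ≤ x ∧ x ≤ bar n i)) =
      ((PhiCol n C).toFinset.filter q).card := by
    rw [countP_toFinset (nodup_phi hcol hOCC)]
    congr 1
    apply Finset.filter_congr
    intro x _
    simp [hq]
  rw [hcountP]
  set C0 : Finset ℕ := C.toFinset.filter
    (fun x => x ∉ Ilist n C ∧ x ∉ (Ilist n C).map (bar n)) with hC0
  have hPdec : (PhiCol n C).toFinset =
      C0 ∪ (Jlist n C).toFinset ∪ ((Jlist n C).map (bar n)).toFinset := by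
    ext x
    rw [List.mem_toFinset, mem_phi hcol hOCC]
    simp only [Finset.mem_union, hC0, Finset.mem_filter, List.mem_toFinset]
    tauto
  rw [hPdec, Finset.filter_union, Finset.filter_union]
  have hJpart : (Jlist n C).toFinset.filter q = ((Jlist n C).take (k+1)).toFinset := by
    ext x
    simp only [Finset.mem_filter, List.mem_toFinset, hq]
    constructor
    · rintro ⟨hxJ, hix, _⟩
      rw [← desc_mem_take_iff hJdesc hxJ hkJ, hkJe]
      exact hix
    · intro hx
      have hxJ : x ∈ Jlist n C := List.mem_of_mem_take hx
      have hix : i ≤ x := by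
        rw [← hkJe]
        exact (desc_mem_take_iff hJdesc hxJ hkJ).mpr hx
      have hxn : x ≤ n := (mem_Fr.mp (hJF x hxJ)).2.1
      exact ⟨hxJ, hix, by omega⟩
  have hJbpart : ((Jlist n C).map (bar n)).toFinset.filter q
      = (((Jlist n C).take (k+1)).map (bar n)).toFinset := by
    ext x
    simp only [Finset.mem_filter, List.mem_toFinset, List.mem_map, hq]
    constructor
    · rintro ⟨⟨t, htJ, rfl⟩, _, hle⟩
      have htF := mem_Fr.mp (hJF t htJ)
      have hit : i ≤ t := by
        rw [bar_le_bar (by omega)] at hle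
        exact hle
      refine ⟨t, ?_, rfl⟩
      rw [← desc_mem_take_iff hJdesc htJ hkJ, hkJe]
      exact hit
    · rintro ⟨t, ht, rfl⟩
      have htJ : t ∈ Jlist n C := List.mem_of_mem_take ht
      have htF := mem_Fr.mp (hJF t htJ)
      have hit : i ≤ t := by
        rw [← hkJe]
        exact (desc_mem_take_iff hJdesc htJ hkJ).mpr ht
      refine ⟨⟨t, htJ, rfl⟩, by have := (bar_gt_n htF.1 htF.2.1).1; omega, ?_⟩
      rw [bar_le_bar (by omega)]
      exact hit
  have hJtakecard : (((Jlist n C).take (k+1))).toFinset.card = k + 1 :=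
    take_toFinset_card hJnd (by omega)
  have hJbtakecard : ((((Jlist n C).take (k+1))).map (bar n)).toFinset.card = k + 1 := by
    have hnd : ((((Jlist n C).take (k+1))).map (bar n)).Nodup := by
      apply ((List.take_sublist _ _).nodup hJnd).map_on
      intro x hx y hy hxy
      have hx' := mem_Fr.mp (hJF x (List.mem_of_mem_take hx))
      have hy' := mem_Fr.mp (hJF y (List.mem_of_mem_take hy))
      exact bar_inj (by omega) (by omega) hxy
    rw [List.toFinset_card_of_nodup hnd, List.length_map, List.length_take]
    omega
  set E : Finset ℕ := (((Ilist n C).take (k+1)) ++ ((Jlist n C).take (k+1))).toFinset with hE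
  have hItake_mem : ∀ x ∈ (Ilist n C).take (k+1), i < x ∧ x ≤ n ∧ x ∈ Ilist n C := by
    intro x hx
    have hxI : x ∈ Ilist n C := List.mem_of_mem_take hx
    have hik : ((Jlist n C)[k] : ℕ) < (Ilist n C)[k]'hkI :=
      (Jlist_props hcol hOCC).2.2.2 k hkJ hkI
    have hge : (Ilist n C)[k]'hkI ≤ x := (desc_mem_take_iff hIdesc hxI hkI).mpr hx
    exact ⟨by omega, (mem_Ilist.mp hxI).2.1, hxI⟩
  have hJtake_mem : ∀ x ∈ (Jlist n C).take (k+1), i ≤ x ∧ x ≤ n ∧ x ∈ Jlist n C := by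
    intro x hx
    have hxJ : x ∈ Jlist n C := List.mem_of_mem_take hx
    have hge : i ≤ x := by
      rw [← hkJe]; exact (desc_mem_take_iff hJdesc hxJ hkJ).mpr hx
    exact ⟨hge, (mem_Fr.mp (hJF x hxJ)).2.1, hxJ⟩
  have hEsub : E ⊆ Finset.Icc i n := by
    intro x hx
    rw [hE, List.mem_toFinset, List.mem_append] at hx
    rcases hx with hx | hx
    · have := hItake_mem x hx; exact Finset.mem_Icc.mpr ⟨by omega, this.2.1⟩
    · have := hJtake_mem x hx; exact Finset.mem_Icc.mpr ⟨this.1, this.2.1⟩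
  have hEcard : E.card = 2 * (k + 1) := by
    have hnd : (((Ilist n C).take (k+1)) ++ ((Jlist n C).take (k+1))).Nodup := by
      rw [List.nodup_append]
      refine ⟨(List.take_sublist _ _).nodup hInd, (List.take_sublist _ _).nodup hJnd, ?_⟩
      intro a ha b hb hab; subst hab
      have haC : a ∈ C := (mem_Ilist.mp (List.mem_of_mem_take ha)).2.2.1
      exact (mem_Fr.mp (hJF a (List.mem_of_mem_take hb))).2.2.1 haC
    rw [hE, List.toFinset_card_of_nodup hnd, List.length_append, List.length_take,
      List.length_take]
    omega
  set f : ℕ → ℕ := fun x => if x ≤ n then x else bar n x with hf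
  have hmapsTo : ∀ x ∈ C0.filter q, f x ∈ (Finset.Icc i n) \ E := by
    intro x hx
    simp only [Finset.mem_filter, hC0, List.mem_toFinset, hq] at hx
    obtain ⟨⟨hxC, hxI, hxIb⟩, hix, hxbi⟩ := hx
    have hxb := hcol.2 x hxC
    rw [Finset.mem_sdiff]
    by_cases hxn : x ≤ n
    · have hfx : f x = x := by simp [hf, hxn]
      rw [hfx]
      refine ⟨Finset.mem_Icc.mpr ⟨hix, hxn⟩, ?_⟩
      rw [hE, List.mem_toFinset, List.mem_append]
      rintro (h | h)
      · exact hxI (hItake_mem x h).2.2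
      · exact (mem_Fr.mp (hJF x (hJtake_mem x h).2.2)).2.2.1 hxC
    · push_neg at hxn
      have hfx : f x = bar n x := by simp only [hf]; rw [if_neg (by omega)]
      rw [hfx]
      constructor
      · rw [Finset.mem_Icc]
        unfold bar at hxbi ⊢
        omega
      · rw [hE, List.mem_toFinset, List.mem_append]
        rintro (h | h)
        · apply hxIb
          have hxx : x = bar n (bar n x) := (bar_bar hxb.2).symm
          rw [hxx]
          exact List.mem_map.mpr ⟨bar n x, (hItake_mem _ h).2.2, rfl⟩
        · have hF := mem_Fr.mp (hJF _ (hJtake_mem _ h).2.2)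
          rw [bar_bar hxb.2] at hF
          exact hF.2.2.2 hxC
  have hinj : Set.InjOn f (C0.filter q : Finset ℕ) := by
    intro x hx y hy hxy
    simp only [Finset.coe_filter, Set.mem_setOf_eq, hC0, Finset.mem_filter,
      List.mem_toFinset] at hx hy
    obtain ⟨⟨hxC, hxI, hxIb⟩, _⟩ := hx
    obtain ⟨⟨hyC, hyI, hyIb⟩, _⟩ := hy
    have hxb := hcol.2 x hxC
    have hyb := hcol.2 y hyC
    by_cases hxn : x ≤ n <;> by_cases hyn : y ≤ n
    · simpa [hf, hxn, hyn] using hxy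
    · exfalso
      simp only [hf, if_pos hxn, if_neg hyn] at hxy
      apply hxI
      apply mem_Ilist.mpr
      refine ⟨hxb.1, hxn, hxC, ?_⟩
      rw [hxy, bar_bar hyb.2]
      exact hyC
    · exfalso
      simp only [hf, if_neg hxn, if_pos hyn] at hxy
      apply hyI
      apply mem_Ilist.mpr
      refine ⟨hyb.1, hyn, hyC, ?_⟩
      rw [← hxy, bar_bar hxb.2]
      exact hxC
    · simp only [hf, if_neg hxn, if_neg hyn] at hxy
      exact bar_inj hxb.2 hyb.2 hxy
  have hacard := Finset.card_le_card_of_injOn f hmapsTo hinj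
  have hsd : ((Finset.Icc i n) \ E).card = (Finset.Icc i n).card - E.card :=
    Finset.card_sdiff_of_subset hEsub
  have hEle := Finset.card_le_card hEsub
  have hIcc : (Finset.Icc i n).card = n + 1 - i := by rw [Nat.card_Icc]
  have hb' : ((Jlist n C).toFinset.filter q).card = k + 1 := by
    rw [hJpart]; exact hJtakecard
  have hc' : (((Jlist n C).map (bar n)).toFinset.filter q).card = k + 1 := by
    rw [hJbpart]; exact hJbtakecard
  have hcard1 : ((C0.filter q ∪ (Jlist n C).toFinset.filter q) ∪
      ((Jlist n C).map (bar n)).toFinset.filter q).card ≤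
      (C0.filter q).card + ((Jlist n C).toFinset.filter q).card +
      (((Jlist n C).map (bar n)).toFinset.filter q).card := by
    calc ((C0.filter q ∪ (Jlist n C).toFinset.filter q) ∪
        ((Jlist n C).map (bar n)).toFinset.filter q).card
        ≤ (C0.filter q ∪ (Jlist n C).toFinset.filter q).card +
          (((Jlist n C).map (bar n)).toFinset.filter q).card := Finset.card_union_le _ _
      _ ≤ _ := by
          have := Finset.card_union_le (C0.filter q) ((Jlist n C).toFinset.filter q)
          omega
  refine le_trans hcard1 ?_
  rw [hb', hc']
  omega

/-! ### Reflection -/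

def rho (n x : ℕ) : ℕ := if x ≤ n then n + 1 - x else 3 * n + 1 - x

def reflectCol (n : ℕ) (D : List ℕ) : List ℕ := sortCol (D.map (rho n))

lemma rho_bounds {n x : ℕ} (h1 : 1 ≤ x) (h2 : x ≤ 2 * n) :
    1 ≤ rho n x ∧ rho n x ≤ 2 * n := by unfold rho; split <;> omega

lemma rho_rho {n x : ℕ} (h1 : 1 ≤ x) (h2 : x ≤ 2 * n) : rho n (rho n x) = x := by
  unfold rho; split <;> [skip; skip] <;> split <;> omega

lemma rho_le_n {n x : ℕ} (h1 : 1 ≤ x) (h2 : x ≤ 2 * n) : rho n x ≤ n ↔ x ≤ n := by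
  unfold rho; split <;> omega

lemma rho_unbar {n x : ℕ} (h1 : 1 ≤ x) (h2 : x ≤ n) : rho n x = n + 1 - x := by
  unfold rho; split <;> omega

lemma bar_rho {n x : ℕ} (h1 : 1 ≤ x) (h2 : x ≤ 2 * n) :
    bar n (rho n x) = rho n (bar n x) := by
  unfold bar rho; split <;> [skip; skip] <;> split <;> omega

lemma rho_inj {n x y : ℕ} (hx1 : 1 ≤ x) (hx2 : x ≤ 2 * n) (hy1 : 1 ≤ y) (hy2 : y ≤ 2 * n)
    (h : rho n x = rho n y) : x = y := by
  unfold rho at h; revert h; split <;> [skip; skip] <;> split <;> omega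

lemma mem_reflect {n : ℕ} {D : List ℕ} (hcol : IsColumn n D) {x : ℕ} :
    x ∈ reflectCol n D ↔ 1 ≤ x ∧ x ≤ 2 * n ∧ rho n x ∈ D := by
  rw [reflectCol, sortCol_mem, List.mem_map]
  constructor
  · rintro ⟨y, hy, rfl⟩
    have hb := hcol.2 y hy
    refine ⟨(rho_bounds hb.1 hb.2).1, (rho_bounds hb.1 hb.2).2, ?_⟩
    rw [rho_rho hb.1 hb.2]
    exact hy
  · rintro ⟨h1, h2, h3⟩
    exact ⟨rho n x, h3, rho_rho h1 h2⟩

lemma reflect_isColumn {n : ℕ} {D : List ℕ} (hcol : IsColumn n D) :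
    IsColumn n (reflectCol n D) := by
  have hnd : (D.map (rho n)).Nodup := by
    apply (col_nodup hcol).map_on
    intro x hx y hy hxy
    have hxb := hcol.2 x hx
    have hyb := hcol.2 y hy
    exact rho_inj hxb.1 hxb.2 hyb.1 hyb.2 hxy
  constructor
  · exact sortCol_chain' hnd
  · intro x hx
    have := (mem_reflect hcol).mp hx
    exact ⟨this.1, this.2.1⟩

lemma reflect_length {n : ℕ} (D : List ℕ) : (reflectCol n D).length = D.length := by
  rw [reflectCol, sortCol_length, List.length_map]

lemma reflect_reflect {n : ℕ} {D : List ℕ} (hcol : IsColumn n D) :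
    reflectCol n (reflectCol n D) = D := by
  apply col_eq_of_mem_iff (reflect_isColumn (reflect_isColumn hcol)) hcol
  intro x
  rw [mem_reflect (reflect_isColumn hcol)]
  constructor
  · rintro ⟨h1, h2, h3⟩
    have hh := (mem_reflect hcol).mp h3
    rw [rho_rho h1 h2] at hh
    exact hh.2.2
  · intro hx
    have hb := hcol.2 x hx
    refine ⟨hb.1, hb.2, ?_⟩
    rw [mem_reflect hcol]
    refine ⟨(rho_bounds hb.1 hb.2).1, (rho_bounds hb.1 hb.2).2, ?_⟩
    rwa [rho_rho hb.1 hb.2]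

lemma countP_reflect {n : ℕ} (D : List ℕ) (p : ℕ → Bool) :
    (reflectCol n D).countP p = D.countP (fun y => p (rho n y)) := by
  rw [reflectCol, (sortCol_perm _).countP_eq, List.countP_map]
  rfl

lemma occ_reflect {n : ℕ} {D : List ℕ} (hcol : IsColumn n D) (hco : CoAdm n D) :
    OCC n (reflectCol n D) := by
  intro i hi1 hin hiR hbiR
  have hribd : 1 ≤ bar n i ∧ bar n i ≤ 2 * n := bar_bounds (by omega) (by omega)
  have hi' : rho n i ∈ D := ((mem_reflect hcol).mp hiR).2.2
  have hrhoi : rho n i = n + 1 - i := rho_unbar hi1 hin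
  have hbi' : rho n (bar n i) ∈ D := ((mem_reflect hcol).mp hbiR).2.2
  have hbr : rho n (bar n i) = bar n (rho n i) := (bar_rho (by omega) (by omega)).symm
  have hco' := hco (n + 1 - i) (by omega) (by omega) (hrhoi ▸ hi')
    (by rw [← hrhoi]; rw [hbr] at hbi'; exact hbi')
  have hcnt : (reflectCol n D).countP (fun x => decide (x ≤ i ∨ bar n i ≤ x)) =
      D.countP (fun y => decide (n + 1 - i ≤ y ∧ y ≤ bar n (n + 1 - i))) := by
    rw [countP_reflect]
    apply List.countP_congr
    intro y hy
    have hyb := hcol.2 y hy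
    simp only [decide_eq_true_eq]
    unfold rho bar
    split <;> omega
  rw [hcnt]
  calc D.countP (fun y => decide (n + 1 - i ≤ y ∧ y ≤ bar n (n + 1 - i)))
      ≤ n - (n + 1 - i) + 1 := hco'
    _ = i := by omega

/-! ### Recovering the inverse greedy run -/

lemma specJ_recover {n : ℕ} (F : Finset ℕ) {zs ts : List ℕ}
    (hF : ∀ t ∈ F, 1 ≤ t ∧ t ≤ n)
    (hzs : zs.Pairwise (· > ·)) (hzsn : ∀ z ∈ zs, 1 ≤ z ∧ z ≤ n)
    (hspec : SpecJ F zs (n+1) ts)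
    (G : Finset ℕ)
    (hG : ∀ s, s ∈ G ↔ (1 ≤ s ∧ s ≤ n ∧
      ((n+1-s) ∈ zs ∨ ((n+1-s) ∈ F ∧ (n+1-s) ∉ ts)))) :
    ∀ m, m ≤ zs.length →
      SpecJ G (((ts.take m).map (fun u => n+1-u)).reverse)
        (n + 1 - zs.getD m 0)
        (((zs.take m).map (fun u => n+1-u)).reverse) := by
  have hprops := specJ_props F hspec
  have hlen : ts.length = zs.length := hprops.1
  have htmem : ∀ x ∈ ts, x ∈ F := fun x hx => (hprops.2.1 x hx).1
  have htlt := hprops.2.2.2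
  intro m
  induction m with
  | zero => intro _; simp [SpecJ]
  | succ m ih =>
    intro hm1
    have hm : m < zs.length := by omega
    have hmt : m < ts.length := by omega
    have htsm : ts.take (m+1) = (ts.take m).concat ts[m] := (List.take_concat_get hmt).symm
    have hzsm : zs.take (m+1) = (zs.take m).concat zs[m] := (List.take_concat_get hm).symm
    rw [htsm, hzsm, List.map_concat, List.map_concat]
    simp only [List.concat_eq_append, List.reverse_append, List.reverse_cons, List.reverse_nil,
      List.nil_append, List.singleton_append]
    have hzm := hzsn zs[m] (List.getElem_mem hm)
    have htm := hF ts[m] (htmem ts[m] (List.getElem_mem hmt))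
    have htz : ts[m] < zs[m] := htlt m hmt hm
    refine ⟨n+1-zs[m], ((zs.take m).map (fun u => n+1-u)).reverse, rfl, ?_, ?_, ?_, ?_⟩
    · rw [hG]
      refine ⟨by omega, by omega, Or.inl ?_⟩
      have he : n+1-(n+1-zs[m]) = zs[m] := by omega
      rw [he]
      exact List.getElem_mem hm
    · rcases Nat.lt_or_ge (m+1) zs.length with hm2 | hm2
      · have h1 : zs.getD (m+1) 0 = zs[m+1] := List.getD_eq_getElem zs 0 hm2
        have h2 : zs[m+1] < zs[m] := List.pairwise_iff_getElem.mp hzs m (m+1) hm hm2 (by omega)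
        have h3 := (hzsn zs[m+1] (List.getElem_mem hm2)).1
        rw [h1]
        omega
      · have h1 : zs.getD (m+1) 0 = 0 := List.getD_eq_default _ _ (by omega)
        rw [h1]
        omega
    · intro s hsG hslt
      rw [hG] at hsG
      obtain ⟨hs1, hs2, hcase⟩ := hsG
      have hut : ts[m] < n+1-s := by omega
      rcases hcase with hcz | ⟨hcF, hcT⟩
      · rcases Nat.lt_or_ge (m+1) zs.length with hm2 | hm2
        · have h1 : zs.getD (m+1) 0 = zs[m+1] := List.getD_eq_getElem zs 0 hm2
          rw [h1] at hslt
          have h2 : zs[m+1] < n+1-s := by omega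
          have := desc_mem_ge hzs hcz hm2 h2
          omega
        · obtain ⟨j, hj, hje⟩ := List.mem_iff_getElem.mp hcz
          have hle : zs[m] ≤ zs[j] := desc_le_of_le hzs hm (by omega)
          omega
      · by_cases hum : n+1-s < zs[m]
        · exfalso
          have huF : n+1-s ∈ F := hcF
          have hub : n+1-s < n + 1 := by omega
          have := specJ_gap F hspec hzs m hm hmt (n+1-s) huF hut hum hub
          exact hcT (List.mem_of_mem_take this)
        · omega
    · have hihh := ih (by omega)
      rw [List.getD_eq_getElem zs 0 hm] at hihh
      exact hihh


/-! ### The key identity Φ(ρ(Φ(C))) = ρ(C) -/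

lemma mem_rev_map_f {n : ℕ} {l : List ℕ} (hl : ∀ t ∈ l, 1 ≤ t ∧ t ≤ n) {x : ℕ}
    (hx1 : 1 ≤ x) (hx2 : x ≤ 2 * n) :
    (x ∈ (l.map (fun u => n+1-u)).reverse ↔ (x ≤ n ∧ n+1-x ∈ l)) := by
  rw [List.mem_reverse, List.mem_map]
  constructor
  · rintro ⟨t, ht, rfl⟩
    have := hl t ht
    refine ⟨by omega, ?_⟩
    have he : n+1-(n+1-t) = t := by omega
    rwa [he]
  · rintro ⟨hxn, hmem⟩
    exact ⟨n+1-x, hmem, by omega⟩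

lemma mem_rev_map_f_bar {n : ℕ} {l : List ℕ} (hl : ∀ t ∈ l, 1 ≤ t ∧ t ≤ n) {x : ℕ}
    (hx1 : 1 ≤ x) (hx2 : x ≤ 2 * n) :
    (x ∈ ((l.map (fun u => n+1-u)).reverse).map (bar n) ↔
      (n < x ∧ ∃ t ∈ l, bar n t = rho n x)) := by
  rw [List.mem_map]
  constructor
  · rintro ⟨a, ha, rfl⟩
    rw [List.mem_reverse, List.mem_map] at ha
    obtain ⟨t, ht, rfl⟩ := ha
    have hb := hl t ht
    have h1 : bar n (n+1-t) = n + t := by unfold bar; omega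
    have h2 : rho n (n + t) = bar n t := by unfold rho bar; split <;> omega
    rw [h1]
    exact ⟨by omega, t, ht, by rw [h2]⟩
  · rintro ⟨hxn, t, ht, hte⟩
    have hb := hl t ht
    have hx : x = n + t := by
      have : rho n x = 3*n+1-x := by unfold rho; split <;> omega
      rw [this] at hte
      unfold bar at hte
      omega
    refine ⟨n+1-t, ?_, ?_⟩
    · rw [List.mem_reverse, List.mem_map]
      exact ⟨t, ht, rfl⟩
    · unfold bar; omega

lemma phi_reflect_phi {n : ℕ} {C : List ℕ} (hcol : IsColumn n C) (hOCC : OCC n C) :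
    PhiCol n (reflectCol n (PhiCol n C)) = reflectCol n C := by
  have hDcol := phi_isColumn hcol hOCC
  have hDco := phi_coadm hcol hOCC
  have hEcol : IsColumn n (reflectCol n (PhiCol n C)) := reflect_isColumn hDcol
  have hEocc : OCC n (reflectCol n (PhiCol n C)) := occ_reflect hDcol hDco
  have hJI := (Jlist_props hcol hOCC).1
  have hJF := (Jlist_props hcol hOCC).2.1
  have hJdesc := (Jlist_props hcol hOCC).2.2.1
  have hIdesc := Ilist_desc n C
  have hJbnd : ∀ t ∈ Jlist n C, 1 ≤ t ∧ t ≤ n := fun t ht =>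
    ⟨(mem_Fr.mp (hJF t ht)).1, (mem_Fr.mp (hJF t ht)).2.1⟩
  have hIbnd : ∀ z ∈ Ilist n C, 1 ≤ z ∧ z ≤ n := fun z hz =>
    ⟨(mem_Ilist.mp hz).1, (mem_Ilist.mp hz).2.1⟩
  -- the pairs of E are the reflected J
  have hIE : Ilist n (reflectCol n (PhiCol n C)) = ((Jlist n C).map (fun u => n+1-u)).reverse := by
    apply desc_eq_of_mem_iff (Ilist_desc n _)
    · rw [List.pairwise_reverse, List.pairwise_map]
      apply List.Pairwise.imp_of_mem (R := (· > ·)) ?_ hJdesc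
      intro a b ha hb hab
      have := hJbnd a ha
      have := hJbnd b hb
      omega
    · intro z
      rw [mem_Ilist]
      constructor
      · rintro ⟨h1, h2, h3, h4⟩
        have hz' := ((mem_reflect hDcol).mp h3).2.2
        have hbz' := ((mem_reflect hDcol).mp h4).2.2
        rw [rho_unbar h1 h2] at hz'
        have hbrz : rho n (bar n z) = bar n (n+1-z) := by
          rw [← bar_rho h1 (by omega), rho_unbar h1 h2]
        rw [hbrz] at hbz'
        have hu : (n+1-z) ∈ Ilist n (PhiCol n C) :=
          mem_Ilist.mpr ⟨by omega, by omega, hz', hbz'⟩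
        rw [Ilist_phi hcol hOCC] at hu
        exact (mem_rev_map_f hJbnd h1 (by omega)).mpr ⟨h2, hu⟩
      · intro hz
        rw [List.mem_reverse, List.mem_map] at hz
        obtain ⟨t, ht, rfl⟩ := hz
        have hb := hJbnd t ht
        have h1 : (1:ℕ) ≤ n+1-t := by omega
        have h2 : n+1-t ≤ n := by omega
        refine ⟨h1, h2, ?_, ?_⟩
        · rw [mem_reflect hDcol]
          refine ⟨h1, by omega, ?_⟩
          rw [rho_unbar h1 h2]
          have he : n+1-(n+1-t) = t := by omega
          rw [he]
          exact (mem_phi hcol hOCC).mpr (Or.inr (Or.inl ht))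
        · rw [mem_reflect hDcol]
          have hbb : 1 ≤ bar n (n+1-t) ∧ bar n (n+1-t) ≤ 2*n := bar_bounds h1 (by omega)
          refine ⟨hbb.1, hbb.2, ?_⟩
          have hbrz : rho n (bar n (n+1-t)) = bar n (n+1-(n+1-t)) := by
            rw [← bar_rho h1 (by omega), rho_unbar h1 h2]
          rw [hbrz]
          have he : n+1-(n+1-t) = t := by omega
          rw [he]
          exact (mem_phi hcol hOCC).mpr (Or.inr (Or.inr (List.mem_map.mpr ⟨t, ht, rfl⟩)))
  -- the free set of E
  have hFrE : ∀ s, s ∈ Fr n (reflectCol n (PhiCol n C)) ↔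
      (1 ≤ s ∧ s ≤ n ∧ ((n+1-s) ∈ Ilist n C ∨
        ((n+1-s) ∈ Fr n C ∧ (n+1-s) ∉ Jlist n C))) := by
    intro s
    rw [mem_Fr]
    constructor
    · rintro ⟨h1, h2, h3, h4⟩
      refine ⟨h1, h2, ?_⟩
      have hsE : (n+1-s) ∉ PhiCol n C := fun hD => h3 ((mem_reflect hDcol).mpr
        ⟨h1, by omega, by rw [rho_unbar h1 h2]; exact hD⟩)
      have hbsE : bar n (n+1-s) ∉ PhiCol n C := by
        intro hD
        apply h4
        rw [mem_reflect hDcol]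
        have hbb := bar_bounds h1 (by omega : s ≤ 2*n)
        refine ⟨hbb.1, hbb.2, ?_⟩
        rw [← bar_rho h1 (by omega), rho_unbar h1 h2]
        exact hD
      by_cases hI : (n+1-s) ∈ Ilist n C
      · exact Or.inl hI
      · refine Or.inr ⟨mem_Fr.mpr ⟨by omega, by omega, ?_, ?_⟩, ?_⟩
        · intro hC
          exact hsE ((mem_phi hcol hOCC).mpr (Or.inl ⟨hC, hI,
            fun hb => by have := Ib_gt_n hb; omega⟩))
        · intro hC
          apply hbsE
          refine (mem_phi hcol hOCC).mpr (Or.inl ⟨hC, ?_, ?_⟩)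
          · intro hmem
            have hm1 := (mem_Ilist.mp hmem).2.1
            have hm2 := (bar_gt_n (n := n) (x := n+1-s) (by omega) (by omega)).1
            omega
          · intro hb
            obtain ⟨w, hw, hwe⟩ := List.mem_map.mp hb
            have hwb := hIbnd w hw
            have hww : w = n+1-s := bar_inj (by omega) (by omega) hwe
            exact hI (hww ▸ hw)
        · intro hJ
          exact hsE ((mem_phi hcol hOCC).mpr (Or.inr (Or.inl hJ)))
    · rintro ⟨h1, h2, hcase⟩
      refine ⟨h1, h2, ?_, ?_⟩
      · intro hsE
        have hmem := ((mem_reflect hDcol).mp hsE).2.2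
        rw [rho_unbar h1 h2] at hmem
        rcases (mem_phi hcol hOCC).mp hmem with ⟨hC, hI, _⟩ | hJ | hJb
        · rcases hcase with hI' | ⟨hF', _⟩
          · exact hI hI'
          · exact (mem_Fr.mp hF').2.2.1 hC
        · rcases hcase with hI' | ⟨_, hJ'⟩
          · exact (mem_Fr.mp (hJF _ hJ)).2.2.1 (mem_Ilist.mp hI').2.2.1
          · exact hJ' hJ
        · have := Jb_facts hcol hOCC hJb
          omega
      · intro hsE
        have hb2 := ((mem_reflect hDcol).mp hsE).2.2
        have hrw : rho n (bar n s) = bar n (n+1-s) := by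
          rw [← bar_rho h1 (by omega), rho_unbar h1 h2]
        rw [hrw] at hb2
        rcases (mem_phi hcol hOCC).mp hb2 with ⟨hC, _, hIb⟩ | hJ | hJb
        · rcases hcase with hI' | ⟨hF', _⟩
          · exact hIb (List.mem_map.mpr ⟨n+1-s, hI', rfl⟩)
          · exact (mem_Fr.mp hF').2.2.2 hC
        · have hj1 := (mem_Fr.mp (hJF _ hJ)).2.1
          have := (bar_gt_n (n := n) (x := n+1-s) (by omega) (by omega)).1
          omega
        · obtain ⟨w, hw, hwe⟩ := List.mem_map.mp hJb
          have hwb := mem_Fr.mp (hJF _ hw)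
          have hww : w = n+1-s := bar_inj (by omega) (by omega) hwe
          rcases hcase with hI' | ⟨_, hJ'⟩
          · exact hwb.2.2.1 (mem_Ilist.mp (hww ▸ hI' : w ∈ Ilist n C)).2.2.1
          · exact hJ' (hww ▸ hw)
  -- the greedy run on E
  have hspecE : SpecJ (Fr n (reflectCol n (PhiCol n C)))
      (Ilist n (reflectCol n (PhiCol n C))) (n+1)
      (((Ilist n C).map (fun u => n+1-u)).reverse) := by
    have hrec := specJ_recover (Fr n C)
      (fun t ht => ⟨(mem_Fr.mp ht).1, (mem_Fr.mp ht).2.1⟩)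
      hIdesc hIbnd (jlist_spec hcol hOCC) (Fr n (reflectCol n (PhiCol n C))) hFrE
      (Ilist n C).length (le_refl _)
    rw [List.getD_eq_default _ _ (le_refl _)] at hrec
    rw [show (Jlist n C).take (Ilist n C).length = Jlist n C from by
      rw [← hJI]; exact List.take_length ..] at hrec
    rw [List.take_length] at hrec
    rw [hIE]
    rw [Nat.sub_zero] at hrec
    exact hrec
  have hJE : Jlist n (reflectCol n (PhiCol n C)) =
      ((Ilist n C).map (fun u => n+1-u)).reverse := by
    have hsome : JlistOpt n (reflectCol n (PhiCol n C)) =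
        some (((Ilist n C).map (fun u => n+1-u)).reverse) :=
      splitJ_eq_some_iff.mpr hspecE
    unfold Jlist
    rw [hsome]
    rfl
  -- final extensionality
  apply col_eq_of_mem_iff (phi_isColumn hEcol hEocc) (reflect_isColumn hcol)
  intro x
  by_cases hxb : 1 ≤ x ∧ x ≤ 2*n
  swap
  · constructor
    · intro h
      exact absurd ((phi_isColumn hEcol hEocc).2 x h) hxb
    · intro h
      exact absurd ((reflect_isColumn hcol).2 x h) hxb
  obtain ⟨hx1, hx2⟩ := hxb
  have hyb := rho_bounds hx1 hx2
  rw [mem_phi hEcol hEocc, mem_reflect hcol, hIE, hJE]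
  have t1 : x ∈ reflectCol n (PhiCol n C) ↔ rho n x ∈ PhiCol n C := by
    rw [mem_reflect hDcol]
    constructor
    · exact fun h => h.2.2
    · exact fun h => ⟨hx1, hx2, h⟩
  have t2 := mem_rev_map_f (l := Jlist n C) hJbnd hx1 hx2
  have t4 := mem_rev_map_f (l := Ilist n C) hIbnd hx1 hx2
  have t3 := mem_rev_map_f_bar (l := Jlist n C) hJbnd hx1 hx2
  have t5 := mem_rev_map_f_bar (l := Ilist n C) hIbnd hx1 hx2
  rw [t1, t2, t3, t4, t5]
  have hxny : x ≤ n → rho n x = n+1-x := fun h => rho_unbar hx1 h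
  have hyJ : ∀ t ∈ Jlist n C, t ∉ C := fun t ht => (mem_Fr.mp (hJF t ht)).2.2.1
  have hyJb : ∀ t ∈ Jlist n C, bar n t ∉ C := fun t ht => (mem_Fr.mp (hJF t ht)).2.2.2
  rw [mem_phi hcol hOCC]
  constructor
  · rintro (⟨hyD, hnJ, hnJb⟩ | ⟨hxn, hyI⟩ | ⟨hxn, t, ht, hte⟩)
    · refine ⟨hx1, hx2, ?_⟩
      rcases hyD with ⟨hyC, _, _⟩ | hyJ' | hyJb'
      · exact hyC
      · exfalso
        have hb := hJbnd _ hyJ'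
        have hxn : x ≤ n := (rho_le_n hx1 hx2).mp (by omega)
        exact hnJ ⟨hxn, by rw [← rho_unbar hx1 hxn]; exact hyJ'⟩
      · exfalso
        obtain ⟨t, ht, hte⟩ := List.mem_map.mp hyJb'
        have hb := hJbnd t ht
        have hgt : n < rho n x := by rw [← hte]; exact (bar_gt_n hb.1 hb.2).1
        have hxn : n < x := by
          by_contra hc
          push_neg at hc
          rw [rho_unbar hx1 hc] at hgt
          omega
        exact hnJb ⟨hxn, t, ht, hte⟩
    · refine ⟨hx1, hx2, ?_⟩
      rw [rho_unbar hx1 hxn]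
      exact (mem_Ilist.mp hyI).2.2.1
    · refine ⟨hx1, hx2, ?_⟩
      rw [← hte]
      exact (mem_Ilist.mp ht).2.2.2
  · rintro ⟨_, _, hyC⟩
    by_cases hxn : x ≤ n
    · have hrx : rho n x = n+1-x := rho_unbar hx1 hxn
      by_cases hyI : n+1-x ∈ Ilist n C
      · exact Or.inr (Or.inl ⟨hxn, hyI⟩)
      · refine Or.inl ⟨Or.inl ⟨hyC, by rwa [hrx], ?_⟩, ?_, ?_⟩
        · intro hb
          have := Ib_gt_n hb
          omega
        · rintro ⟨_, hJ⟩
          exact hyJ _ hJ (by rwa [hrx] at hyC)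
        · rintro ⟨hgt, _⟩
          omega
    · push_neg at hxn
      have hygt : n < rho n x := by unfold rho; split <;> omega
      by_cases hyIb : rho n x ∈ (Ilist n C).map (bar n)
      · obtain ⟨t, ht, hte⟩ := List.mem_map.mp hyIb
        exact Or.inr (Or.inr ⟨hxn, t, ht, hte⟩)
      · refine Or.inl ⟨Or.inl ⟨hyC, ?_, hyIb⟩, ?_, ?_⟩
        · intro hmem
          have := (mem_Ilist.mp hmem).2.1
          omega
        · rintro ⟨hle, _⟩
          omega
        · rintro ⟨_, t, ht, hte⟩
          exact hyJb t ht (by rwa [hte])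

/-! ### Psi and the final assembly -/

def PsiCol (n : ℕ) (D : List ℕ) : List ℕ := reflectCol n (PhiCol n (reflectCol n D))

lemma psi_phi {n : ℕ} {C : List ℕ} (hcol : IsColumn n C) (hOCC : OCC n C) :
    PsiCol n (PhiCol n C) = C := by
  unfold PsiCol
  rw [phi_reflect_phi hcol hOCC, reflect_reflect hcol]

lemma phi_psi {n : ℕ} {D : List ℕ} (hcol : IsColumn n D) (hco : CoAdm n D) :
    PhiCol n (PsiCol n D) = D := by
  unfold PsiCol
  rw [phi_reflect_phi (reflect_isColumn hcol) (occ_reflect hcol hco), reflect_reflect hcol]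


end PhiProof

/-- `Φ(C)` is a coadmissible column of the same height, and `Φ` is a
bijection between admissible and coadmissible columns of the same height. -/
theorem phiCol_coadmissible_bijective (n : ℕ) :
    (∀ C, IsColumn n C → OCC n C →
      IsColumn n (PhiCol n C) ∧ CoAdm n (PhiCol n C) ∧ (PhiCol n C).length = C.length) ∧
    (∀ h : ℕ, Set.BijOn (PhiCol n)
      {C | IsColumn n C ∧ OCC n C ∧ C.length = h}
      {C | IsColumn n C ∧ CoAdm n C ∧ C.length = h}) := by
  constructor
  · intro C hcol hOCC
    exact ⟨PhiProof.phi_isColumn hcol hOCC, PhiProof.phi_coadm hcol hOCC,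
      PhiProof.phi_length hcol hOCC⟩
  · intro h
    refine ⟨?_, ?_, ?_⟩
    · intro C hC
      obtain ⟨hcol, hOCC, hlen⟩ := hC
      exact ⟨PhiProof.phi_isColumn hcol hOCC, PhiProof.phi_coadm hcol hOCC,
        by rw [PhiProof.phi_length hcol hOCC, hlen]⟩
    · intro C1 h1 C2 h2 he
      obtain ⟨h1c, h1o, _⟩ := h1
      obtain ⟨h2c, h2o, _⟩ := h2
      have e1 := PhiProof.psi_phi h1c h1o
      have e2 := PhiProof.psi_phi h2c h2o
      rw [← e1, ← e2, he]
    · intro D hD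
      obtain ⟨hDc, hDco, hDlen⟩ := hD
      have hC'c : IsColumn n (PhiProof.reflectCol n D) := PhiProof.reflect_isColumn hDc
      have hC'o : OCC n (PhiProof.reflectCol n D) := PhiProof.occ_reflect hDc hDco
      refine ⟨PhiProof.PsiCol n D, ⟨?_, ?_, ?_⟩, PhiProof.phi_psi hDc hDco⟩
      · exact PhiProof.reflect_isColumn (PhiProof.phi_isColumn hC'c hC'o)
      · exact PhiProof.occ_reflect (PhiProof.phi_isColumn hC'c hC'o)
          (PhiProof.phi_coadm hC'c hC'o)
      · show (PhiProof.PsiCol n D).length = h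
        unfold PhiProof.PsiCol
        rw [PhiProof.reflect_length, PhiProof.phi_length hC'c hC'o, PhiProof.reflect_length]
        exact hDlen
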